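/- For integers q ≥ 2 and real x with x ≥ q, the function F_q(x) = Σ_{n≥0} x^n/(n!·q^{n(n+1)/2}) satisfies F_q(x) ≤ e·q^{1/8}·x^{(log_q(x)−1)/2}. -/

import Mathlib

/-- `F_q(x) = Σ_{n≥0} x^n/(n!·q^{n(n+1)/2})`. -/
noncomputable def Fq (q : ℕ) (x : ℝ) : ℝ :=
  ∑' n : ℕ, x ^ n / (n.factorial * (q : ℝ) ^ (n * (n + 1) / 2))

lemma key_bound (q : ℕ) (hq : 2 ≤ q) (x : ℝ) (hx : (q : ℝ) ≤ x) (n : ℕ) :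
    x ^ n / (q : ℝ) ^ (n * (n + 1) / 2) ≤
      (q : ℝ) ^ ((1 : ℝ) / 8) * x ^ ((Real.logb q x - 1) / 2) := by
  have hq1 : (1 : ℝ) < q := by exact_mod_cast hq.trans_lt' one_lt_two
  have hq0 : (0 : ℝ) < q := by linarith
  have hx0 : (0 : ℝ) < x := lt_of_lt_of_le hq0 hx
  set t := Real.logb q x with ht
  have hxq : (q : ℝ) ^ t = x := Real.rpow_logb hq0 (ne_of_gt hq1) hx0
  have hN : ((n * (n + 1) / 2 : ℕ) : ℝ) = ((n : ℝ) * (n + 1)) / 2 := by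
    rw [Nat.cast_div (Nat.even_mul_succ_self n).two_dvd (by norm_num)]
    push_cast; ring
  have h1 : x ^ n = (q : ℝ) ^ (t * n) := by
    rw [← hxq, ← Real.rpow_natCast ((q:ℝ) ^ t) n, ← Real.rpow_mul hq0.le]
  have h2 : (q : ℝ) ^ (n * (n + 1) / 2) = (q : ℝ) ^ (((n : ℝ) * (n + 1)) / 2 : ℝ) := by
    rw [← Real.rpow_natCast (q : ℝ) (n * (n + 1) / 2), hN]
  have h3 : x ^ ((t - 1) / 2) = (q : ℝ) ^ (t * ((t - 1) / 2)) := by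
    rw [← hxq, ← Real.rpow_mul hq0.le]
  rw [h1, h2, h3, div_eq_mul_inv, ← Real.rpow_neg hq0.le, ← Real.rpow_add hq0,
    ← Real.rpow_add hq0]
  apply Real.rpow_le_rpow_left_iff hq1 |>.mpr
  nlinarith [sq_nonneg ((n : ℝ) - t + 1/2)]

/-- for `q ≥ 2` and `x ≥ q`,
`F_q(x) ≤ e·q^{1/8}·x^{(log_q(x)−1)/2}`. -/
theorem stmt_10 (q : ℕ) (hq : 2 ≤ q) (x : ℝ) (hx : (q : ℝ) ≤ x) :
    Fq q x ≤ Real.exp 1 * (q : ℝ) ^ ((1 : ℝ) / 8) * x ^ ((Real.logb q x - 1) / 2) := by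
  have hq0 : (0 : ℝ) < q := by positivity
  have hx0 : (0 : ℝ) < x := lt_of_lt_of_le hq0 hx
  set M := (q : ℝ) ^ ((1 : ℝ) / 8) * x ^ ((Real.logb q x - 1) / 2) with hM
  have hM0 : 0 ≤ M := by positivity
  have hle : ∀ n : ℕ, x ^ n / (n.factorial * (q : ℝ) ^ (n * (n + 1) / 2)) ≤
      M * ((1 : ℝ) ^ n / n.factorial) := by
    intro n
    have hf : (0 : ℝ) < n.factorial := by exact_mod_cast n.factorial_pos
    have := key_bound q hq x hx n
    rw [one_pow]
    calc x ^ n / (n.factorial * (q : ℝ) ^ (n * (n + 1) / 2))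
        = (x ^ n / (q : ℝ) ^ (n * (n + 1) / 2)) / n.factorial := by
          field_simp
      _ ≤ M / n.factorial := by
          exact div_le_div_of_nonneg_right this hf.le
      _ = M * (1 / n.factorial) := by ring
  have hs : Summable fun n : ℕ => M * ((1 : ℝ) ^ n / n.factorial) :=
    (NormedSpace.expSeries_div_summable (1 : ℝ)).mul_left M
  have hnn : ∀ n : ℕ, 0 ≤ x ^ n / (n.factorial * (q : ℝ) ^ (n * (n + 1) / 2)) := by
    intro n; positivity
  have hsum : Summable fun n : ℕ => x ^ n / (n.factorial * (q : ℝ) ^ (n * (n + 1) / 2)) :=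
    Summable.of_nonneg_of_le hnn hle hs
  have : Fq q x ≤ ∑' n : ℕ, M * ((1 : ℝ) ^ n / n.factorial) :=
    Summable.tsum_le_tsum hle hsum hs
  calc Fq q x ≤ ∑' n : ℕ, M * ((1 : ℝ) ^ n / n.factorial) := this
    _ = M * ∑' n : ℕ, (1 : ℝ) ^ n / n.factorial := tsum_mul_left
    _ = M * Real.exp 1 := by
        rw [Real.exp_eq_exp_ℝ, NormedSpace.exp_eq_tsum_div]
    _ = Real.exp 1 * (q : ℝ) ^ ((1 : ℝ) / 8) * x ^ ((Real.logb q x - 1) / 2) := by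
        rw [hM]; ring
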